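/- If there exists a set of k mutually orthogonal frequency rectangles of type FR(m,n;q) (a k-MOFR(m,n;q)), then k(q-1) ≤ (m-1)(n-1), i.e. k ≤ (m-1)(n-1)/(q-1). -/

import Mathlib

/-- An `m × n` frequency rectangle on `q` symbols: each symbol appears exactly
`n/q` times in each row and `m/q` times in each column. -/
def IsFreqRect (m n q : ℕ) (F : Fin m → Fin n → Fin q) : Prop :=
  (∀ i : Fin m, ∀ s : Fin q,
      ((Finset.univ : Finset (Fin n)).filter (fun j => F i j = s)).card * q = n) ∧
  (∀ j : Fin n, ∀ s : Fin q,
      ((Finset.univ : Finset (Fin m)).filter (fun i => F i j = s)).card * q = m)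

/-- Two frequency rectangles are orthogonal: upon superimposition each ordered
pair of symbols appears exactly `m*n/q^2` times. -/
def OrthogonalFR (m n q : ℕ) (F G : Fin m → Fin n → Fin q) : Prop :=
  ∀ a b : Fin q,
    ((Finset.univ : Finset (Fin m × Fin n)).filter
        (fun p => F p.1 p.2 = a ∧ G p.1 p.2 = b)).card * q ^ 2 = m * n

/-- A `k`-MOFR`(m,n;q)`: a family of `k` frequency rectangles, pairwise orthogonal. -/
def IsMOFR (m n q k : ℕ) (F : Fin k → Fin m → Fin n → Fin q) : Prop :=
  (∀ i, IsFreqRect m n q (F i)) ∧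
  (∀ i j, i ≠ j → OrthogonalFR m n q (F i) (F j))

/-- An orthogonal array OA`(N,k,q,t)`. -/
def IsOA (N k q t : ℕ) (A : Fin N → Fin k → Fin q) : Prop :=
  ∀ c : Fin t → Fin k, Function.Injective c →
    ∀ y : Fin t → Fin q,
      ((Finset.univ : Finset (Fin N)).filter (fun r => ∀ s, A r (c s) = y s)).card * q ^ t = N

/-- A family of frequency rectangles is `t`-orthogonal: superimposing any `t` of
them, each ordered `t`-tuple of symbols occurs exactly `m*n/q^t` times. -/
def IsTOrthogonal (m n q t k : ℕ) (F : Fin k → Fin m → Fin n → Fin q) : Prop :=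
  ∀ c : Fin t → Fin k, Function.Injective c →
    ∀ y : Fin t → Fin q,
      ((Finset.univ : Finset (Fin m × Fin n)).filter
          (fun p => ∀ s, F (c s) p.1 p.2 = y s)).card * q ^ t = m * n

/-- A Hadamard matrix of order `n` (entries `±1`, `H Hᵀ = n I`). -/
def IsHadamard (n : ℕ) (H : Matrix (Fin n) (Fin n) ℤ) : Prop :=
  (∀ i j, H i j = 1 ∨ H i j = -1) ∧
  H * H.transpose = (n : ℤ) • (1 : Matrix (Fin n) (Fin n) ℤ)

open Finset

private lemma sum_ind {α : Type*} [Fintype α] (P : α → Prop) [DecidablePred P] :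
    ∑ x : α, (if P x then (1:ℝ) else 0) = ((Finset.univ.filter P).card : ℝ) := by
  simp [Finset.sum_boole]

private lemma dot_expand {α : Type*} [Fintype α] (A B : α → ℝ) (c : ℝ) :
    ∑ x, (A x - c) * (B x - c)
      = (∑ x, A x * B x) - c * (∑ x, A x) - c * (∑ x, B x) + (Fintype.card α) * (c * c) := by
  have h : ∀ x, (A x - c) * (B x - c) = A x * B x - c * A x - c * B x + c * c := fun x => by ring
  simp_rw [h]
  rw [Finset.sum_add_distrib, Finset.sum_sub_distrib, Finset.sum_sub_distrib,
      ← Finset.mul_sum, ← Finset.mul_sum, Finset.sum_const, Finset.card_univ, nsmul_eq_mul]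

section cnt
variable {m n q : ℕ}

private lemma row_cnt (hq0 : (q:ℝ) ≠ 0) {F : Fin m → Fin n → Fin q} (hF : IsFreqRect m n q F)
    (a : Fin m) (s : Fin q) :
    ∑ j : Fin n, (if F a j = s then (1:ℝ) else 0) = (n:ℝ) / q := by
  rw [sum_ind, eq_div_iff hq0]
  exact_mod_cast hF.1 a s

private lemma col_cnt (hq0 : (q:ℝ) ≠ 0) {F : Fin m → Fin n → Fin q} (hF : IsFreqRect m n q F)
    (b : Fin n) (s : Fin q) :
    ∑ a : Fin m, (if F a b = s then (1:ℝ) else 0) = (m:ℝ) / q := by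
  rw [sum_ind, eq_div_iff hq0]
  exact_mod_cast hF.2 b s

private lemma tot_cnt (hq0 : (q:ℝ) ≠ 0) {F : Fin m → Fin n → Fin q} (hF : IsFreqRect m n q F)
    (s : Fin q) :
    ∑ p : Fin m × Fin n, (if F p.1 p.2 = s then (1:ℝ) else 0) = (m:ℝ) * n / q := by
  rw [Fintype.sum_prod_type]
  simp_rw [row_cnt hq0 hF _ s]
  rw [Finset.sum_const, Finset.card_univ, Fintype.card_fin, nsmul_eq_mul]
  ring

private lemma pair_cnt_cross (hq0 : (q:ℝ) ≠ 0) {F G : Fin m → Fin n → Fin q}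
    (hFG : OrthogonalFR m n q F G) (a b : Fin q) :
    ∑ p : Fin m × Fin n,
      (if F p.1 p.2 = a then (1:ℝ) else 0) * (if G p.1 p.2 = b then 1 else 0)
      = (m:ℝ) * n / q ^ 2 := by
  have hred : ∀ p : Fin m × Fin n,
      (if F p.1 p.2 = a then (1:ℝ) else 0) * (if G p.1 p.2 = b then 1 else 0)
      = if (F p.1 p.2 = a ∧ G p.1 p.2 = b) then 1 else 0 := by
    intro p
    by_cases h1 : F p.1 p.2 = a <;> by_cases h2 : G p.1 p.2 = b <;> simp [h1, h2]
  simp_rw [hred]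
  rw [sum_ind, eq_div_iff (pow_ne_zero 2 hq0)]
  exact_mod_cast hFG a b

private lemma pair_cnt_same (hq0 : (q:ℝ) ≠ 0) {F : Fin m → Fin n → Fin q}
    (hF : IsFreqRect m n q F) (a b : Fin q) :
    ∑ p : Fin m × Fin n,
      (if F p.1 p.2 = a then (1:ℝ) else 0) * (if F p.1 p.2 = b then 1 else 0)
      = if a = b then (m:ℝ) * n / q else 0 := by
  by_cases hab : a = b
  · subst hab
    have hred : ∀ p : Fin m × Fin n,
        (if F p.1 p.2 = a then (1:ℝ) else 0) * (if F p.1 p.2 = a then 1 else 0)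
        = if F p.1 p.2 = a then 1 else 0 := by
      intro p; by_cases h1 : F p.1 p.2 = a <;> simp [h1]
    simp_rw [hred]
    rw [tot_cnt hq0 hF a]
    simp
  · have hred : ∀ p : Fin m × Fin n,
        (if F p.1 p.2 = a then (1:ℝ) else 0) * (if F p.1 p.2 = b then 1 else 0) = 0 := by
      intro p
      by_cases h1 : F p.1 p.2 = a
      · by_cases h2 : F p.1 p.2 = b
        · exact absurd (h1 ▸ h2 : a = b) hab
        · simp [h2]
      · simp [h1]
    simp_rw [hred]
    rw [Finset.sum_const_zero, if_neg hab]

end cnt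

private noncomputable def vv {m n q : ℕ} (F : Fin m → Fin n → Fin q) (s : Fin q) :
    Fin m × Fin n → ℝ :=
  fun p => (if F p.1 p.2 = s then 1 else 0) - 1/q

private noncomputable def rowv (m n : ℕ) (a : Fin m) : Fin m × Fin n → ℝ :=
  fun p => if p.1 = a then 1 else 0

private noncomputable def colv (m n : ℕ) (b : ℕ) : Fin m × Fin n → ℝ :=
  fun p => if (p.2 : ℕ) = b then 1 else 0

section dot
variable {m n q : ℕ}

private lemma rowzero (hq0 : (q:ℝ) ≠ 0) {F : Fin m → Fin n → Fin q}
    (hF : IsFreqRect m n q F) (a : Fin m) (s : Fin q) :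
    ∑ j : Fin n, ((if F a j = s then (1:ℝ) else 0) - 1/q) = 0 := by
  rw [Finset.sum_sub_distrib, row_cnt hq0 hF a s, Finset.sum_const, Finset.card_univ,
      Fintype.card_fin, nsmul_eq_mul]
  field_simp
  ring

private lemma colzero (hq0 : (q:ℝ) ≠ 0) {F : Fin m → Fin n → Fin q}
    (hF : IsFreqRect m n q F) (b : Fin n) (s : Fin q) :
    ∑ a : Fin m, ((if F a b = s then (1:ℝ) else 0) - 1/q) = 0 := by
  rw [Finset.sum_sub_distrib, col_cnt hq0 hF b s, Finset.sum_const, Finset.card_univ,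
      Fintype.card_fin, nsmul_eq_mul]
  field_simp
  ring

private lemma dot_vv_cross (hq0 : (q:ℝ) ≠ 0) {F G : Fin m → Fin n → Fin q}
    (hF : IsFreqRect m n q F) (hG : IsFreqRect m n q G) (hFG : OrthogonalFR m n q F G)
    (a b : Fin q) :
    ∑ p : Fin m × Fin n, vv F a p * vv G b p = 0 := by
  simp only [vv]
  rw [dot_expand, pair_cnt_cross hq0 hFG a b, tot_cnt hq0 hF a, tot_cnt hq0 hG b,
      Fintype.card_prod, Fintype.card_fin, Fintype.card_fin]
  push_cast
  field_simp
  ring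

private lemma dot_vv_same (hq0 : (q:ℝ) ≠ 0) {F : Fin m → Fin n → Fin q}
    (hF : IsFreqRect m n q F) (a b : Fin q) :
    ∑ p : Fin m × Fin n, vv F a p * vv F b p
      = (if a = b then (m:ℝ) * n / q else 0) - (m:ℝ) * n / q ^ 2 := by
  simp only [vv]
  rw [dot_expand, pair_cnt_same hq0 hF a b, tot_cnt hq0 hF a, tot_cnt hq0 hF b,
      Fintype.card_prod, Fintype.card_fin, Fintype.card_fin]
  push_cast
  by_cases hab : a = b <;> field_simp <;> ring

private lemma dot_rv (hq0 : (q:ℝ) ≠ 0) {F : Fin m → Fin n → Fin q}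
    (hF : IsFreqRect m n q F) (a : Fin m) (s : Fin q) :
    ∑ p : Fin m × Fin n, rowv m n a p * vv F s p = 0 := by
  simp only [vv, rowv]
  rw [Fintype.sum_prod_type, Finset.sum_eq_single a]
  · simpa using rowzero hq0 hF a s
  · intro x _ hx; simp [hx]
  · intro hx; exact absurd (Finset.mem_univ a) hx

private lemma dot_cv (hq0 : (q:ℝ) ≠ 0) {F : Fin m → Fin n → Fin q}
    (hF : IsFreqRect m n q F) (b : Fin (n-1)) (s : Fin q) :
    ∑ p : Fin m × Fin n, colv m n (b:ℕ) p * vv F s p = 0 := by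
  simp only [vv, colv]
  rw [Fintype.sum_prod_type_right,
      Finset.sum_eq_single (⟨(b:ℕ), lt_of_lt_of_le b.2 (Nat.sub_le n 1)⟩ : Fin n)]
  · simpa using colzero hq0 hF ⟨(b:ℕ), lt_of_lt_of_le b.2 (Nat.sub_le n 1)⟩ s
  · intro j _ hj
    have hne : (j:ℕ) ≠ (b:ℕ) := fun hh => hj (Fin.ext hh)
    simp [hne]
  · intro hx; exact absurd (Finset.mem_univ _) hx

end dot

private noncomputable def wfam (m n q k : ℕ) (F : Fin k → Fin m → Fin n → Fin q) :
    (Fin k × Fin (q-1)) ⊕ (Fin m ⊕ Fin (n-1)) → (Fin m × Fin n → ℝ) :=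
  fun u => match u with
  | .inl x => vv (F x.1) (Fin.castLE (Nat.sub_le q 1) x.2)
  | .inr (.inl a) => rowv m n a
  | .inr (.inr b) => colv m n (b : ℕ)


/-- If a k-MOFR(m,n;q) exists, then k ≤ (m-1)(n-1)/(q-1). -/
theorem mofr_upper_bound (m n q k : ℕ) (hq : 2 ≤ q) (hm : 0 < m) (hn : 0 < n)
    (h : ∃ F : Fin k → Fin m → Fin n → Fin q, IsMOFR m n q k F) :
    k * (q - 1) ≤ (m - 1) * (n - 1) := by
  obtain ⟨F, hFR, hOrth⟩ := h
  have hq0 : (q:ℝ) ≠ 0 := Nat.cast_ne_zero.mpr (by omega)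
  have hm0 : (m:ℝ) ≠ 0 := Nat.cast_ne_zero.mpr (by omega)
  have hn0 : (n:ℝ) ≠ 0 := Nat.cast_ne_zero.mpr (by omega)
  have hLI : LinearIndependent ℝ (wfam m n q k F) := by
    rw [Fintype.linearIndependent_iff]
    intro g hg
    have hgp : ∀ p : Fin m × Fin n, ∑ u, g u * wfam m n q k F u p = 0 := by
      intro p
      have h1 := congrFun hg p
      simpa [Finset.sum_apply] using h1
    have hdot : ∀ z : Fin m × Fin n → ℝ,
        ∑ u, g u * (∑ p : Fin m × Fin n, wfam m n q k F u p * z p) = 0 := by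
      intro z
      have h1 : ∑ p : Fin m × Fin n, (∑ u, g u * wfam m n q k F u p) * z p = 0 := by
        simp only [hgp, zero_mul, Finset.sum_const_zero]
      calc ∑ u, g u * (∑ p : Fin m × Fin n, wfam m n q k F u p * z p)
          = ∑ u, ∑ p : Fin m × Fin n, g u * wfam m n q k F u p * z p := by
            simp_rw [Finset.mul_sum, mul_assoc]
        _ = ∑ p : Fin m × Fin n, ∑ u, g u * wfam m n q k F u p * z p := Finset.sum_comm
        _ = ∑ p : Fin m × Fin n, (∑ u, g u * wfam m n q k F u p) * z p := by
            simp_rw [Finset.sum_mul]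
        _ = 0 := h1
    have key : ∀ (i : Fin k) (s : Fin (q-1)),
        (q:ℝ) * g (Sum.inl (i, s)) = ∑ s' : Fin (q-1), g (Sum.inl (i, s')) := by
      intro i s
      have h0 := hdot (vv (F i) (Fin.castLE (Nat.sub_le q 1) s))
      rw [Fintype.sum_sum_type] at h0
      have hz2 : ∀ u : Fin m ⊕ Fin (n-1),
          g (Sum.inr u) * (∑ p : Fin m × Fin n,
            wfam m n q k F (Sum.inr u) p * vv (F i) (Fin.castLE (Nat.sub_le q 1) s) p) = 0 := by
        intro u
        rcases u with a | b
        · rw [show wfam m n q k F (Sum.inr (Sum.inl a)) = rowv m n a from rfl,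
             dot_rv hq0 (hFR i) a _, mul_zero]
        · rw [show wfam m n q k F (Sum.inr (Sum.inr b)) = colv m n (b:ℕ) from rfl,
             dot_cv hq0 (hFR i) b _, mul_zero]
      rw [Finset.sum_eq_zero (fun u _ => hz2 u), add_zero, Fintype.sum_prod_type] at h0
      rw [Finset.sum_eq_single i ?cross ?notmem] at h0
      case cross =>
        intro i' _ hi'
        apply Finset.sum_eq_zero
        intro s' _
        rw [show wfam m n q k F (Sum.inl (i', s'))
              = vv (F i') (Fin.castLE (Nat.sub_le q 1) s') from rfl,
           dot_vv_cross hq0 (hFR i') (hFR i) (hOrth i' i hi') _ _, mul_zero]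
      case notmem =>
        intro hi; exact absurd (Finset.mem_univ i) hi
      have h1 : ∀ s' : Fin (q-1),
          g (Sum.inl (i, s')) * (∑ p : Fin m × Fin n,
            wfam m n q k F (Sum.inl (i, s')) p * vv (F i) (Fin.castLE (Nat.sub_le q 1) s) p)
          = (if s' = s then g (Sum.inl (i, s')) * ((m:ℝ) * n / q) else 0)
            - g (Sum.inl (i, s')) * ((m:ℝ) * n / q ^ 2) := by
        intro s'
        have hiff : (Fin.castLE (Nat.sub_le q 1) s' = Fin.castLE (Nat.sub_le q 1) s) ↔ s' = s :=
          ⟨fun hh => Fin.ext (by simpa using congrArg Fin.val hh), fun hh => by rw [hh]⟩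
        rw [show wfam m n q k F (Sum.inl (i, s'))
              = vv (F i) (Fin.castLE (Nat.sub_le q 1) s') from rfl,
           dot_vv_same hq0 (hFR i), if_congr hiff rfl rfl]
        by_cases hs : s' = s <;> simp [hs] <;> ring
      simp_rw [h1] at h0
      rw [Finset.sum_sub_distrib,
          Finset.sum_ite_eq' Finset.univ s (fun s' => g (Sum.inl (i, s')) * ((m:ℝ) * n / q)),
          if_pos (Finset.mem_univ s), ← Finset.sum_mul] at h0
      have hc : (m:ℝ) * n / q ^ 2 ≠ 0 :=
        div_ne_zero (mul_ne_zero hm0 hn0) (pow_ne_zero 2 hq0)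
      apply mul_left_cancel₀ hc
      have e1 : (m:ℝ) * n / q ^ 2 * ((q:ℝ) * g (Sum.inl (i, s)))
          = g (Sum.inl (i, s)) * ((m:ℝ) * n / q) := by
        field_simp
      rw [e1]
      linarith [h0]
    have hA : ∀ (i : Fin k) (s : Fin (q-1)), g (Sum.inl (i, s)) = 0 := by
      intro i s
      have hT : ∑ s' : Fin (q-1), g (Sum.inl (i, s')) = 0 := by
        have hsum : (q:ℝ) * (∑ s' : Fin (q-1), g (Sum.inl (i, s')))
            = ((q - 1 : ℕ) : ℝ) * (∑ s' : Fin (q-1), g (Sum.inl (i, s'))) := by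
          rw [Finset.mul_sum]
          calc ∑ s' : Fin (q-1), (q:ℝ) * g (Sum.inl (i, s'))
              = ∑ _s' : Fin (q-1), (∑ s'' : Fin (q-1), g (Sum.inl (i, s''))) :=
                Finset.sum_congr rfl fun s' _ => key i s'
            _ = _ := by
                rw [Finset.sum_const, Finset.card_univ, Fintype.card_fin, nsmul_eq_mul]
        have hcast : ((q - 1 : ℕ) : ℝ) = (q:ℝ) - 1 := by
          rw [Nat.cast_sub (by omega), Nat.cast_one]
        rw [hcast] at hsum
        linear_combination hsum
      have hk := key i s
      rw [hT] at hk
      rcases mul_eq_zero.mp hk with h' | h'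
      · exact absurd h' hq0
      · exact h'
    have hB : ∀ a : Fin m, g (Sum.inr (Sum.inl a)) = 0 := by
      intro a
      set j0 : Fin n := ⟨n - 1, by omega⟩ with hj0
      have hp := hgp (a, j0)
      rw [Fintype.sum_sum_type, Fintype.sum_sum_type] at hp
      have hz1 : ∑ x : Fin k × Fin (q-1),
          g (Sum.inl x) * wfam m n q k F (Sum.inl x) (a, j0) = 0 :=
        Finset.sum_eq_zero fun x _ => by obtain ⟨i, s⟩ := x; rw [hA i s, zero_mul]
      have hz2 : ∑ a' : Fin m,
          g (Sum.inr (Sum.inl a')) * wfam m n q k F (Sum.inr (Sum.inl a')) (a, j0)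
          = g (Sum.inr (Sum.inl a)) := by
        rw [Finset.sum_eq_single a]
        · show g _ * rowv m n a (a, j0) = _
          simp [rowv]
        · intro a' _ ha'
          show g _ * rowv m n a' (a, j0) = 0
          have hne : ¬ ((a, j0).1 = a') := fun hh => ha' hh.symm
          simp [rowv, hne]
        · intro hx; exact absurd (Finset.mem_univ _) hx
      have hz3 : ∑ b : Fin (n-1),
          g (Sum.inr (Sum.inr b)) * wfam m n q k F (Sum.inr (Sum.inr b)) (a, j0) = 0 := by
        apply Finset.sum_eq_zero
        intro b _
        show g _ * colv m n (b:ℕ) (a, j0) = 0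
        have hb : ¬ (((a, j0).2 : ℕ) = (b:ℕ)) := by
          have := b.2; simp [hj0]; omega
        simp [colv, hb]
      rw [hz1, hz2, hz3, zero_add, add_zero] at hp
      exact hp
    have hC : ∀ b : Fin (n-1), g (Sum.inr (Sum.inr b)) = 0 := by
      intro b
      set a0 : Fin m := ⟨0, hm⟩ with ha0
      set jb : Fin n := ⟨(b:ℕ), lt_of_lt_of_le b.2 (Nat.sub_le n 1)⟩ with hjb
      have hp := hgp (a0, jb)
      rw [Fintype.sum_sum_type, Fintype.sum_sum_type] at hp
      have hz1 : ∑ x : Fin k × Fin (q-1),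
          g (Sum.inl x) * wfam m n q k F (Sum.inl x) (a0, jb) = 0 :=
        Finset.sum_eq_zero fun x _ => by obtain ⟨i, s⟩ := x; rw [hA i s, zero_mul]
      have hz2 : ∑ a' : Fin m,
          g (Sum.inr (Sum.inl a')) * wfam m n q k F (Sum.inr (Sum.inl a')) (a0, jb) = 0 :=
        Finset.sum_eq_zero fun a' _ => by rw [hB a', zero_mul]
      have hz3 : ∑ b' : Fin (n-1),
          g (Sum.inr (Sum.inr b')) * wfam m n q k F (Sum.inr (Sum.inr b')) (a0, jb)
          = g (Sum.inr (Sum.inr b)) := by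
        rw [Finset.sum_eq_single b]
        · show g _ * colv m n (b:ℕ) (a0, jb) = _
          have hb : (((a0, jb).2 : ℕ) = (b:ℕ)) := by simp [hjb]
          simp [colv, hb, hjb]
        · intro b' _ hb'
          show g _ * colv m n (b':ℕ) (a0, jb) = 0
          have hne : ¬ (((a0, jb).2 : ℕ) = (b':ℕ)) := by
            simp [hjb]
            exact fun hh => hb' (Fin.ext hh).symm
          simp [colv, hne]
        · intro hx; exact absurd (Finset.mem_univ _) hx
      rw [hz1, hz2, hz3, zero_add, zero_add] at hp
      exact hp
    intro u
    rcases u with x | u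
    · obtain ⟨i, s⟩ := x; exact hA i s
    · rcases u with a | b
      · exact hB a
      · exact hC b
  have hcard := hLI.fintype_card_le_finrank
  rw [Module.finrank_fintype_fun_eq_card] at hcard
  simp only [Fintype.card_sum, Fintype.card_prod, Fintype.card_fin] at hcard
  obtain ⟨M, rfl⟩ : ∃ M, m = M + 1 := ⟨m - 1, by omega⟩
  obtain ⟨N, rfl⟩ : ∃ N, n = N + 1 := ⟨n - 1, by omega⟩
  simp only [Nat.add_sub_cancel]
  have hexp : (M + 1) * (N + 1) = M * N + M + N + 1 := by ring
  rw [hexp] at hcard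
  simp only [Nat.add_sub_cancel] at hcard
  linarith
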